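/- arXiv:2106.14872 — 2 statements merged into one kernel-verified Lean document; each statement's English description precedes it below -/
import Mathlib

section
/- Hypercyclicity of powers: Let X be a (real or complex) infinite-dimensional separable Banach space and let A be a densely defined linear operator in X such that every power A^n (n ∈ ℕ) is a closed operator, and suppose there exist a set Y ⊆ C^∞(A) dense in X and a mapping B : Y → Y such that (1) ABf = f for every f ∈ Y and (2) for every f ∈ Y, A^n f → 0 and B^n f → 0 as n → ∞. Then for every n ∈ ℕ the power A^n is hypercyclic. -/
open Filter Topology TopologicalSpace

/-- The domain of the `n`-th power of the operator `A` with domain `D`: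
`x ∈ D(Aⁿ)` iff `Aᵏx ∈ D(A)` for all `k < n`. -/
def opDom {X : Type*} (A : X → X) (D : Set X) (n : ℕ) : Set X :=
  {x | ∀ k < n, A^[k] x ∈ D}

/-- `C^∞(A) = ⋂ₙ D(Aⁿ)`. -/
def opCinf {X : Type*} (A : X → X) (D : Set X) : Set X :=
  {x | ∀ k : ℕ, A^[k] x ∈ D}

/-- `A` is linear on the subspace `D`. -/
def IsLinearOn (𝕜 : Type*) {X : Type*} [RCLike 𝕜] [NormedAddCommGroup X]
    [NormedSpace 𝕜 X] (A : X → X) (D : Set X) : Prop :=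
  (∀ x ∈ D, ∀ y ∈ D, A (x + y) = A x + A y) ∧
  (∀ (c : 𝕜), ∀ x ∈ D, A (c • x) = c • A x)

/-- The `n`-th power of `A` (with domain `D`) is a closed operator:
its graph is closed in `X × X`. -/
def ClosedPower {X : Type*} [NormedAddCommGroup X] (A : X → X) (D : Set X)
    (n : ℕ) : Prop :=
  IsClosed {p : X × X | p.1 ∈ opDom A D n ∧ p.2 = A^[n] p.1}

/-- A hypercyclic vector for `A`: a nonzero `f ∈ C^∞(A)` with dense orbit. -/
def HypercyclicVec {X : Type*} [NormedAddCommGroup X] (A : X → X) (D : Set X)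
    (f : X) : Prop :=
  f ∈ opCinf A D ∧ f ≠ 0 ∧ Dense (Set.range fun n : ℕ => A^[n] f)

/-- `A` (with domain `D`) is hypercyclic. -/
def HypercyclicOp {X : Type*} [NormedAddCommGroup X] (A : X → X) (D : Set X) :
    Prop :=
  ∃ f, HypercyclicVec A D f

/-- `f` is a periodic point of `A`: `f ∈ D(A^N)` and `A^N f = f` for some `N ≥ 1`. -/
def PeriodicPt {X : Type*} (A : X → X) (D : Set X) (f : X) : Prop :=
  ∃ N : ℕ, 0 < N ∧ f ∈ opDom A D N ∧ A^[N] f = f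

/-- `A` (with domain `D`) is chaotic: hypercyclic with a dense set of periodic
points. -/
def ChaoticOp {X : Type*} [NormedAddCommGroup X] (A : X → X) (D : Set X) : Prop :=
  HypercyclicOp A D ∧ Dense {f | PeriodicPt A D f}

set_option linter.unusedSectionVars false

section Aux

variable {𝕜 X : Type*} [RCLike 𝕜] [NormedAddCommGroup X] [NormedSpace 𝕜 X]

lemma opDom_antitone (A : X → X) (D : Set X) {s t : ℕ} (h : s ≤ t) :
    opDom A D t ⊆ opDom A D s := fun _ hx k hk => hx k (lt_of_lt_of_le hk h)

lemma opCinf_subset_opDom (A : X → X) (D : Set X) (n : ℕ) :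
    opCinf A D ⊆ opDom A D n := fun _ hx k _ => hx k

lemma opCinf_subset_pow (A : X → X) (D : Set X) (n : ℕ) :
    opCinf A D ⊆ opCinf (A^[n]) (opDom A D n) := by
  intro x hx k i _
  rw [← Function.iterate_mul, ← Function.iterate_add_apply]
  exact hx _

variable {D : Submodule 𝕜 X} {A : X → X}

lemma mapA_zero (hlin : IsLinearOn 𝕜 A (D : Set X)) : A (0 : X) = 0 := by
  have := hlin.2 (0 : 𝕜) 0 D.zero_mem
  simpa using this

lemma iterA_zero (hlin : IsLinearOn 𝕜 A (D : Set X)) (k : ℕ) : A^[k] (0 : X) = 0 := by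
  induction k with
  | zero => rfl
  | succ k ih => rw [Function.iterate_succ_apply', ih, mapA_zero hlin]

lemma zero_mem_opDom (hlin : IsLinearOn 𝕜 A (D : Set X)) (k : ℕ) :
    (0 : X) ∈ opDom A (D : Set X) k := by
  intro j _
  rw [iterA_zero hlin]
  exact D.zero_mem

lemma iterA_add (hlin : IsLinearOn 𝕜 A (D : Set X)) :
    ∀ k, ∀ x ∈ opDom A (D : Set X) k, ∀ y ∈ opDom A (D : Set X) k,
      A^[k] (x + y) = A^[k] x + A^[k] y := by
  intro k
  induction k with
  | zero => intro x _ y _; rfl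
  | succ k ih =>
    intro x hx y hy
    have hxk := opDom_antitone A (D : Set X) (Nat.le_succ k) hx
    have hyk := opDom_antitone A (D : Set X) (Nat.le_succ k) hy
    rw [Function.iterate_succ_apply', Function.iterate_succ_apply',
      Function.iterate_succ_apply', ih x hxk y hyk]
    exact hlin.1 _ (hx k (Nat.lt_succ_self k)) _ (hy k (Nat.lt_succ_self k))

lemma add_mem_opDom (hlin : IsLinearOn 𝕜 A (D : Set X)) {k : ℕ} {x y : X}
    (hx : x ∈ opDom A (D : Set X) k) (hy : y ∈ opDom A (D : Set X) k) :
    x + y ∈ opDom A (D : Set X) k := by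
  intro j hj
  have hxj := opDom_antitone A (D : Set X) hj.le hx
  have hyj := opDom_antitone A (D : Set X) hj.le hy
  rw [iterA_add hlin j x hxj y hyj]
  exact D.add_mem (hx j hj) (hy j hj)

lemma iterA_sum (hlin : IsLinearOn 𝕜 A (D : Set X)) (g : ℕ → X)
    (hg : ∀ j, g j ∈ opCinf A (D : Set X)) (p k : ℕ) :
    (∑ j ∈ Finset.range p, g j) ∈ opDom A (D : Set X) k ∧
      A^[k] (∑ j ∈ Finset.range p, g j) = ∑ j ∈ Finset.range p, A^[k] (g j) := by
  induction p with
  | zero => simpa using ⟨zero_mem_opDom hlin k, iterA_zero hlin k⟩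
  | succ p ih =>
    have hgp : g p ∈ opDom A (D : Set X) k := opCinf_subset_opDom A _ k (hg p)
    constructor
    · rw [Finset.sum_range_succ]
      exact add_mem_opDom hlin ih.1 hgp
    · rw [Finset.sum_range_succ, Finset.sum_range_succ,
        iterA_add hlin k _ ih.1 _ hgp, ih.2]

-- B facts
variable {Y : Set X} {B : X → X}

lemma iterB_mem (hBmaps : Set.MapsTo B Y Y) (k : ℕ) {f : X} (hf : f ∈ Y) :
    B^[k] f ∈ Y := hBmaps.iterate k hf

lemma iterA_iterB (hBmaps : Set.MapsTo B Y Y) (h1 : ∀ f ∈ Y, A (B f) = f) :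
    ∀ k, ∀ f ∈ Y, A^[k] (B^[k] f) = f := by
  intro k
  induction k with
  | zero => intro f _; rfl
  | succ k ih =>
    intro f hf
    rw [Function.iterate_succ_apply' B, Function.iterate_succ_apply A,
      h1 _ (iterB_mem hBmaps k hf), ih f hf]

lemma iterA_iterB_add (hBmaps : Set.MapsTo B Y Y) (h1 : ∀ f ∈ Y, A (B f) = f)
    (s d : ℕ) {f : X} (hf : f ∈ Y) : A^[s] (B^[s + d] f) = B^[d] f := by
  rw [Function.iterate_add_apply B s d]
  exact iterA_iterB hBmaps h1 s _ (iterB_mem hBmaps d hf)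

end Aux


set_option maxHeartbeats 1000000 in
/-- **Hypercyclicity of powers.** -/
theorem hypercyclicity_of_powers
    {𝕜 X : Type*} [RCLike 𝕜] [NormedAddCommGroup X] [NormedSpace 𝕜 X]
    [CompleteSpace X] [SeparableSpace X]
    (hinfdim : ¬ FiniteDimensional 𝕜 X)
    (D : Submodule 𝕜 X) (A : X → X)
    (hlin : IsLinearOn 𝕜 A (D : Set X))
    (hdd : Dense (D : Set X))
    (hcl : ∀ n : ℕ, 0 < n → ClosedPower A (D : Set X) n)
    (Y : Set X) (hYsub : Y ⊆ opCinf A (D : Set X)) (hYdense : Dense Y)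
    (B : X → X) (hBmaps : Set.MapsTo B Y Y)
    (h1 : ∀ f ∈ Y, A (B f) = f)
    (h2 : ∀ f ∈ Y, Filter.Tendsto (fun n : ℕ => A^[n] f) Filter.atTop (nhds 0) ∧
      Filter.Tendsto (fun n : ℕ => B^[n] f) Filter.atTop (nhds 0))
    :
    ∀ n : ℕ, 0 < n → HypercyclicOp (A^[n]) (opDom A (D : Set X) n) := by
  intro n hn
  classical
  -- a nonzero vector
  have hX : ∃ x : X, x ≠ 0 := by
    by_contra h
    push_neg at h
    haveI : Subsingleton X := ⟨fun a b => by rw [h a, h b]⟩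
    exact hinfdim inferInstance
  obtain ⟨x0, hx0⟩ := hX
  -- a dense sequence inside Y
  haveI : SeparableSpace (↥Y) := inferInstance
  obtain ⟨s, hsY, hsc, hsd⟩ := hYdense.exists_countable_dense_subset
  have hsne : s.Nonempty := hsd.nonempty
  obtain ⟨y, hys⟩ := Set.Countable.exists_eq_range hsc hsne
  have hyY : ∀ i, y i ∈ Y := fun i => hsY (by rw [hys]; exact Set.mem_range_self i)
  have hyd : ∀ (x : X), ∀ r > 0, ∃ i, dist x (y i) < r := by
    intro x r hr
    obtain ⟨p, hp⟩ := Metric.dense_iff.mp hsd x r hr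
    rw [hys] at hp
    obtain ⟨i, rfl⟩ := hp.2
    exact ⟨i, by simpa [dist_comm] using Metric.mem_ball.mp hp.1⟩
  set z : ℕ → X := fun k => y (Nat.unpair k).1 with hzdef
  have hzY : ∀ k, z k ∈ Y := fun k => hyY _
  have hrec : ∀ i K : ℕ, ∃ k, K ≤ k ∧ z k = y i := fun i K =>
    ⟨Nat.pair i K, Nat.right_le_pair i K, by simp [hzdef, Nat.unpair_pair]⟩
  -- thresholds
  have hN : ∀ j : ℕ, ∃ Nj : ℕ, 1 ≤ Nj ∧ ∀ t, Nj ≤ t →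
      ‖B^[t] (z j)‖ ≤ (1/2 : ℝ)^j ∧ ∀ i < j, ‖A^[t] (z i)‖ ≤ (1/2 : ℝ)^j := by
    intro j
    have hpos : (0:ℝ) < (1/2)^j := by positivity
    have e1 : ∀ᶠ t in Filter.atTop, ‖B^[t] (z j)‖ ≤ (1/2 : ℝ)^j := by
      have h := ((h2 (z j) (hzY j)).2).norm
      rw [norm_zero] at h
      exact h.eventually (eventually_le_nhds hpos)
    have e2 : ∀ᶠ t in Filter.atTop, ∀ i ∈ Finset.range j, ‖A^[t] (z i)‖ ≤ (1/2 : ℝ)^j := by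
      rw [Filter.eventually_all_finset]
      intro i _
      have h := ((h2 (z i) (hzY i)).1).norm
      rw [norm_zero] at h
      exact h.eventually (eventually_le_nhds hpos)
    obtain ⟨N0, hN0⟩ := Filter.eventually_atTop.mp (e1.and e2)
    refine ⟨max N0 1, le_max_right _ _, fun t ht => ?_⟩
    obtain ⟨hB', hA'⟩ := hN0 t (le_trans (le_max_left _ _) ht)
    exact ⟨hB', fun i hi => hA' i (Finset.mem_range.mpr hi)⟩
  choose N hN1 hNs using hN
  -- the exponents
  set m : ℕ → ℕ := fun j => Nat.rec 0 (fun j mj => mj + N (j + 1)) j with hmdef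
  have hm0 : m 0 = 0 := rfl
  have hms : ∀ j, m (j + 1) = m j + N (j + 1) := fun j => rfl
  have hmmono : Monotone m := monotone_nat_of_le_succ fun j => by
    rw [hms]; exact Nat.le_add_right _ _
  have hmgap : ∀ i j, i < j → m i + N j ≤ m j := by
    intro i j hij
    induction j with
    | zero => omega
    | succ j ih =>
      rcases Nat.lt_succ_iff_lt_or_eq.mp hij with h | h
      · have h1' : m i ≤ m j := hmmono h.le
        rw [hms]; omega
      · subst h; rw [hms]
  have hmge : ∀ j, j ≤ m j := by
    intro j
    induction j with
    | zero => simp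
    | succ j ih => have := hN1 (j + 1); rw [hms]; omega
  -- the building blocks
  set g : ℕ → X := fun j => B^[n * m j] (z j) with hgdef
  have hgY : ∀ j, g j ∈ Y := fun j => iterB_mem hBmaps _ (hzY j)
  have hgC : ∀ j, g j ∈ opCinf A (D : Set X) := fun j => hYsub (hgY j)
  have hAg_ge : ∀ k j, k ≤ j → A^[n * m k] (g j) = B^[n * (m j - m k)] (z j) := by
    intro k j hkj
    have hd : n * m j = n * m k + n * (m j - m k) := by
      rw [← Nat.mul_add, Nat.add_sub_cancel' (hmmono hkj)]
    show A^[n * m k] (B^[n * m j] (z j)) = _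
    rw [hd]
    exact iterA_iterB_add hBmaps h1 _ _ (hzY j)
  have hAg_lt : ∀ k j, j ≤ k → A^[n * m k] (g j) = A^[n * (m k - m j)] (z j) := by
    intro k j hjk
    have hd : n * m k = n * (m k - m j) + n * m j := by
      rw [← Nat.mul_add, Nat.sub_add_cancel (hmmono hjk)]
    show A^[n * m k] (B^[n * m j] (z j)) = _
    rw [hd, Function.iterate_add_apply, iterA_iterB hBmaps h1 _ _ (hzY j)]
  have hb_ge : ∀ k j, k < j → ‖A^[n * m k] (g j)‖ ≤ (1/2 : ℝ)^j := by
    intro k j hkj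
    rw [hAg_ge k j hkj.le]
    refine (hNs j _ ?_).1
    have h1' := hmgap k j hkj
    have h2' : (m j - m k) ≤ n * (m j - m k) := Nat.le_mul_of_pos_left _ hn
    omega
  have hb_lt : ∀ k j, j < k → ‖A^[n * m k] (g j)‖ ≤ (1/2 : ℝ)^k := by
    intro k j hjk
    rw [hAg_lt k j hjk.le]
    refine (hNs k _ ?_).2 j hjk
    have h1' := hmgap j k hjk
    have h2' : (m k - m j) ≤ n * (m k - m j) := Nat.le_mul_of_pos_left _ hn
    omega
  have hgk : ∀ k, A^[n * m k] (g k) = z k := by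
    intro k
    rw [hAg_ge k k le_rfl]
    simp
  have hgnorm : ∀ j, 1 ≤ j → ‖g j‖ ≤ (1/2 : ℝ)^j := by
    intro j hj
    have h := hb_ge 0 j hj
    rw [hm0] at h
    simpa using h
  -- the hypercyclic vector
  have hsumg : Summable g := by
    refine Summable.of_norm_bounded_eventually_nat (g := fun j => (1/2 : ℝ)^j)
      summable_geometric_two ?_
    filter_upwards [Filter.eventually_ge_atTop 1] with j hj using hgnorm j hj
  set f := ∑' j, g j with hfdef
  have hfsum : HasSum g f := hsumg.hasSum
  have hsumh : ∀ k, Summable (fun j => A^[n * m k] (g j)) := by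
    intro k
    refine Summable.of_norm_bounded_eventually_nat (g := fun j => (1/2 : ℝ)^j)
      summable_geometric_two ?_
    filter_upwards [Filter.eventually_gt_atTop k] with j hj using hb_ge k j hj
  set w : ℕ → X := fun k => ∑' j, A^[n * m k] (g j) with hwdef
  -- closedness step
  have hkey : ∀ k, 1 ≤ k → f ∈ opDom A (D : Set X) (n * m k) ∧ A^[n * m k] f = w k := by
    intro k hk
    have hpos : 0 < n * m k := Nat.mul_pos hn (lt_of_lt_of_le hk (hmge k))
    have hclk : IsClosed {p : X × X | p.1 ∈ opDom A (D : Set X) (n * m k) ∧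
        p.2 = A^[n * m k] p.1} := hcl (n * m k) hpos
    have htend : Filter.Tendsto (fun p => ((∑ j ∈ Finset.range p, g j),
        (∑ j ∈ Finset.range p, A^[n * m k] (g j)))) Filter.atTop (nhds (f, w k)) :=
      (hfsum.tendsto_sum_nat).prodMk_nhds ((hsumh k).hasSum.tendsto_sum_nat)
    have hmem : ∀ p : ℕ, ((∑ j ∈ Finset.range p, g j),
        (∑ j ∈ Finset.range p, A^[n * m k] (g j))) ∈
        {p : X × X | p.1 ∈ opDom A (D : Set X) (n * m k) ∧ p.2 = A^[n * m k] p.1} := by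
      intro p
      obtain ⟨hmem', heq⟩ := iterA_sum hlin g hgC p (n * m k)
      exact ⟨hmem', heq.symm⟩
    have := hclk.mem_of_tendsto htend (Filter.Eventually.of_forall hmem)
    exact ⟨this.1, this.2.symm⟩
  -- approximation bound
  have hwbound : ∀ k, 1 ≤ k → ‖w k - z k‖ ≤ ((k : ℝ) + 1) * (1/2)^k := by
    intro k hk
    have hsh := hsumh k
    have hsplit := Summable.sum_add_tsum_nat_add (f := fun j => A^[n * m k] (g j)) (k + 1) hsh
    have e1 : w k - z k = (∑ j ∈ Finset.range k, A^[n * m k] (g j)) +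
        ∑' j, A^[n * m k] (g (j + (k + 1))) := by
      rw [hwdef]
      show (∑' j, A^[n * m k] (g j)) - z k = _
      rw [← hsplit, Finset.sum_range_succ, hgk k]
      abel
    rw [e1]
    have hgeo : HasSum (fun j : ℕ => (1/2 : ℝ)^(j + (k + 1))) ((1/2 : ℝ)^k) := by
      have h := hasSum_geometric_two.mul_right ((1/2 : ℝ)^(k + 1))
      convert h using 2 with j
      · rfl
      · rw [pow_add]
      · rw [pow_succ]; ring
    have tb : ‖∑' j, A^[n * m k] (g (j + (k + 1)))‖ ≤ (1/2 : ℝ)^k := by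
      refine tsum_of_norm_bounded hgeo fun j => ?_
      exact hb_ge k (j + (k + 1)) (by omega)
    have fb : ‖∑ j ∈ Finset.range k, A^[n * m k] (g j)‖ ≤ (k : ℝ) * (1/2)^k := by
      calc ‖∑ j ∈ Finset.range k, A^[n * m k] (g j)‖
          ≤ ∑ j ∈ Finset.range k, ‖A^[n * m k] (g j)‖ := norm_sum_le _ _
        _ ≤ ∑ _j ∈ Finset.range k, (1/2 : ℝ)^k :=
            Finset.sum_le_sum fun j hj => hb_lt k j (Finset.mem_range.mp hj)
        _ = (k : ℝ) * (1/2)^k := by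
            rw [Finset.sum_const, Finset.card_range, nsmul_eq_mul]
    calc ‖(∑ j ∈ Finset.range k, A^[n * m k] (g j)) +
          ∑' j, A^[n * m k] (g (j + (k + 1)))‖
        ≤ ‖∑ j ∈ Finset.range k, A^[n * m k] (g j)‖ +
          ‖∑' j, A^[n * m k] (g (j + (k + 1)))‖ := norm_add_le _ _
      _ ≤ (k : ℝ) * (1/2)^k + (1/2 : ℝ)^k := add_le_add fb tb
      _ = ((k : ℝ) + 1) * (1/2)^k := by ring
  -- f ∈ C^∞(A)
  have hfC : f ∈ opCinf A (D : Set X) := by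
    intro t
    have hk := (hkey (t + 1) (by omega)).1
    have hlt : t < n * m (t + 1) := by
      have h1' := hmge (t + 1)
      have h2' : m (t + 1) ≤ n * m (t + 1) := Nat.le_mul_of_pos_left _ hn
      omega
    exact hk t hlt
  -- summability of the error bound
  have hsum2 : Summable (fun k : ℕ => ((k : ℝ) + 1) * (1/2)^k) := by
    have ha : Summable (fun k : ℕ => (k : ℝ) * (1/2)^k) := by
      have := summable_pow_mul_geometric_of_norm_lt_one (R := ℝ) 1
        (r := (1/2 : ℝ)) (by rw [Real.norm_eq_abs, abs_of_pos (by norm_num : (0:ℝ) < 1/2)]; norm_num)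
      simpa using this
    have hb' : Summable (fun k : ℕ => ((1 : ℝ)/2)^k) := summable_geometric_two
    simpa [add_mul] using ha.add hb'
  -- density of the orbit
  have hdense : Dense (Set.range fun p : ℕ => (A^[n])^[p] f) := by
    refine Metric.denseRange_iff.mpr ?_
    intro x r hr
    obtain ⟨i, hi⟩ := hyd x (r/2) (by positivity)
    have hev : ∀ᶠ k : ℕ in Filter.atTop, ((k : ℝ) + 1) * (1/2)^k < r/2 :=
      hsum2.tendsto_atTop_zero.eventually (eventually_lt_nhds (by positivity))
    obtain ⟨K, hK⟩ := Filter.eventually_atTop.mp hev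
    obtain ⟨k, hkK, hzk⟩ := hrec i (max K 1)
    have hk1 : 1 ≤ k := le_trans (le_max_right K 1) hkK
    have hkKK : K ≤ k := le_trans (le_max_left K 1) hkK
    refine ⟨m k, ?_⟩
    have horb : (A^[n])^[m k] f = w k := by
      rw [← Function.iterate_mul]; exact (hkey k hk1).2
    show dist x ((A^[n])^[m k] f) < r
    rw [horb]
    calc dist x (w k) ≤ dist x (z k) + dist (z k) (w k) := dist_triangle _ _ _
      _ < r/2 + r/2 := by
          refine add_lt_add_of_lt_of_le ?_ ?_
          · rw [hzk]; exact hi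
          · calc dist (z k) (w k) = ‖w k - z k‖ := by
                  rw [dist_eq_norm, norm_sub_rev]
              _ ≤ ((k : ℝ) + 1) * (1/2)^k := hwbound k hk1
              _ ≤ r/2 := (hK k hkKK).le
      _ = r := by ring
  -- f is nonzero
  have hf0 : f ≠ 0 := by
    intro h0
    have hsub : (Set.range fun p : ℕ => (A^[n])^[p] f) ⊆ {0} := by
      rintro u ⟨p, rfl⟩
      show (A^[n])^[p] f ∈ ({0} : Set X)
      rw [h0, ← Function.iterate_mul]
      exact Set.mem_singleton_iff.mpr (iterA_zero hlin _)
    have hd0 : Dense ({(0 : X)} : Set X) := hdense.mono hsub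
    have hx : x0 ∈ closure ({(0 : X)} : Set X) := hd0 x0
    rw [closure_singleton] at hx
    exact hx0 hx
  exact ⟨f, opCinf_subset_pow A (D : Set X) n hfC, hf0, hdense⟩
end

section
/- Hypercyclicity of unimodular multiples: Let X be a (real or complex) infinite-dimensional separable Banach space and let A be a densely defined linear operator in X such that every power A^n (n ∈ ℕ) is a closed operator, and suppose there exist a set Y ⊆ C^∞(A) dense in X and a mapping B : Y → Y such that (1) ABf = f for every f ∈ Y and (2) for every f ∈ Y, A^n f → 0 and B^n f → 0 as n → ∞. Then for every scalar λ with |λ| = 1, the operator λA (with domain D(A)) is hypercyclic. -/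
open Filter Topology TopologicalSpace

section Aux
variable {𝕜 X : Type*} [RCLike 𝕜] [NormedAddCommGroup X] [NormedSpace 𝕜 X]
  {D : Submodule 𝕜 X} {A : X → X}

lemma aux_A_zero (hlin : IsLinearOn 𝕜 A (D : Set X)) : A 0 = 0 := by
  have h := hlin.2 0 0 D.zero_mem
  simpa using h

lemma aux_iter_zero (hlin : IsLinearOn 𝕜 A (D : Set X)) (m : ℕ) : A^[m] (0 : X) = 0 := by
  induction m with
  | zero => rfl
  | succ m ih => rw [Function.iterate_succ_apply', ih, aux_A_zero hlin]

lemma aux_zero_mem (hlin : IsLinearOn 𝕜 A (D : Set X)) : (0 : X) ∈ opCinf A (D : Set X) := by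
  intro k; rw [aux_iter_zero hlin]; exact D.zero_mem

lemma aux_iter_smul (hlin : IsLinearOn 𝕜 A (D : Set X)) {x : X}
    (hx : x ∈ opCinf A (D : Set X)) (c : 𝕜) (m : ℕ) :
    A^[m] (c • x) = c • A^[m] x := by
  induction m with
  | zero => simp
  | succ m ih =>
    rw [Function.iterate_succ_apply', Function.iterate_succ_apply', ih,
      hlin.2 c _ (hx m)]

lemma aux_smul_mem (hlin : IsLinearOn 𝕜 A (D : Set X)) {x : X}
    (hx : x ∈ opCinf A (D : Set X)) (c : 𝕜) : c • x ∈ opCinf A (D : Set X) := by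
  intro k; rw [aux_iter_smul hlin hx c k]; exact D.smul_mem c (hx k)

lemma aux_iter_add (hlin : IsLinearOn 𝕜 A (D : Set X)) {x y : X}
    (hx : x ∈ opCinf A (D : Set X)) (hy : y ∈ opCinf A (D : Set X)) (m : ℕ) :
    A^[m] (x + y) = A^[m] x + A^[m] y := by
  induction m with
  | zero => simp
  | succ m ih =>
    rw [Function.iterate_succ_apply', Function.iterate_succ_apply',
      Function.iterate_succ_apply' A m y, ih, hlin.1 _ (hx m) _ (hy m)]

lemma aux_add_mem (hlin : IsLinearOn 𝕜 A (D : Set X)) {x y : X}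
    (hx : x ∈ opCinf A (D : Set X)) (hy : y ∈ opCinf A (D : Set X)) :
    x + y ∈ opCinf A (D : Set X) := by
  intro k; rw [aux_iter_add hlin hx hy k]; exact D.add_mem (hx k) (hy k)

lemma aux_sum_mem (hlin : IsLinearOn 𝕜 A (D : Set X)) {ι : Type*} {g : ι → X}
    (s : Finset ι) (hg : ∀ i ∈ s, g i ∈ opCinf A (D : Set X)) :
    (∑ i ∈ s, g i) ∈ opCinf A (D : Set X) := by
  classical
  induction s using Finset.induction with
  | empty => simpa using aux_zero_mem hlin
  | insert a s hns ih =>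
    rw [Finset.sum_insert hns]
    exact aux_add_mem hlin (hg a (Finset.mem_insert_self a s))
      (ih fun i hi => hg i (Finset.mem_insert_of_mem hi))

lemma aux_iter_sum (hlin : IsLinearOn 𝕜 A (D : Set X)) {ι : Type*} {g : ι → X}
    (s : Finset ι) (hg : ∀ i ∈ s, g i ∈ opCinf A (D : Set X)) (m : ℕ) :
    A^[m] (∑ i ∈ s, g i) = ∑ i ∈ s, A^[m] (g i) := by
  classical
  induction s using Finset.induction with
  | empty => simpa using aux_iter_zero hlin m
  | insert a s hns ih =>
    rw [Finset.sum_insert hns, Finset.sum_insert hns,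
      aux_iter_add hlin (hg a (Finset.mem_insert_self a s))
        (aux_sum_mem hlin s fun i hi => hg i (Finset.mem_insert_of_mem hi)) m,
      ih fun i hi => hg i (Finset.mem_insert_of_mem hi)]

lemma aux_AB {Y : Set X} {B : X → X} (hBmaps : Set.MapsTo B Y Y)
    (h1 : ∀ f ∈ Y, A (B f) = f) {f : X} (hf : f ∈ Y) :
    ∀ m n, m ≤ n → A^[m] (B^[n] f) = B^[n - m] f := by
  intro m
  induction m with
  | zero => intro n _; simp
  | succ m ih =>
    intro n hn
    obtain ⟨n, rfl⟩ : ∃ n', n = n' + 1 := ⟨n - 1, by omega⟩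
    rw [Function.iterate_succ_apply, Function.iterate_succ_apply' B,
      h1 _ (hBmaps.iterate n hf), ih n (by omega)]
    congr 1
    omega

lemma aux_AB2 {Y : Set X} {B : X → X} (hBmaps : Set.MapsTo B Y Y)
    (h1 : ∀ f ∈ Y, A (B f) = f) {f : X} (hf : f ∈ Y) {m n : ℕ} (hn : n ≤ m) :
    A^[m] (B^[n] f) = A^[m - n] f := by
  calc A^[m] (B^[n] f) = A^[m - n] (A^[n] (B^[n] f)) := by
        rw [← Function.iterate_add_apply]; congr 1; omega
    _ = A^[m - n] f := by rw [aux_AB hBmaps h1 hf n n le_rfl]; simp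

lemma aux_tilde_iter (hlin : IsLinearOn 𝕜 A (D : Set X)) (l : 𝕜) {x : X}
    (hx : ∀ k : ℕ, A^[k] x ∈ (D : Set X)) (m : ℕ) :
    (fun z => l • A z)^[m] x = l ^ m • A^[m] x := by
  induction m with
  | zero => simp
  | succ m ih =>
    rw [Function.iterate_succ_apply', Function.iterate_succ_apply', ih,
      pow_succ, hlin.2 (l ^ m) _ (hx m), smul_smul, mul_comm]

end Aux


/-- **Hypercyclicity of unimodular multiples.** -/
theorem hypercyclicity_of_unimodular_multiples
    {𝕜 X : Type*} [RCLike 𝕜] [NormedAddCommGroup X] [NormedSpace 𝕜 X]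
    [CompleteSpace X] [SeparableSpace X]
    (hinfdim : ¬ FiniteDimensional 𝕜 X)
    (D : Submodule 𝕜 X) (A : X → X)
    (hlin : IsLinearOn 𝕜 A (D : Set X))
    (hdd : Dense (D : Set X))
    (hcl : ∀ n : ℕ, 0 < n → ClosedPower A (D : Set X) n)
    (Y : Set X) (hYsub : Y ⊆ opCinf A (D : Set X)) (hYdense : Dense Y)
    (B : X → X) (hBmaps : Set.MapsTo B Y Y)
    (h1 : ∀ f ∈ Y, A (B f) = f)
    (h2 : ∀ f ∈ Y, Filter.Tendsto (fun n : ℕ => A^[n] f) Filter.atTop (nhds 0) ∧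
      Filter.Tendsto (fun n : ℕ => B^[n] f) Filter.atTop (nhds 0))
    :
    ∀ l : 𝕜, ‖l‖ = 1 → HypercyclicOp (fun x => l • A x) (D : Set X) := by
  classical
  intro l hl
  have hl0 : l ≠ 0 := fun h => by simp [h] at hl
  -- a countable dense subset of `Y`, enumerated so that every value repeats
  obtain ⟨T, hTY, hTc, hYT⟩ :=
    (TopologicalSpace.IsSeparable.of_separableSpace Y).exists_countable_dense_subset
  have hTd : Dense T := by
    have hsub : closure Y ⊆ closure T := by
      rw [← closure_closure (s := T)]
      exact closure_mono hYT
    exact fun x => hsub (hYdense x)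
  have hTne : T.Nonempty := hTd.nonempty
  obtain ⟨u, hu⟩ := hTc.exists_eq_range hTne
  set y : ℕ → X := fun j => u (Nat.unpair j).1 with hy_def
  have hyY : ∀ j, y j ∈ Y := by
    intro j
    apply hTY
    rw [hu]
    exact ⟨(Nat.unpair j).1, rfl⟩
  clear_value y
  -- recursive choice of the times `n k`
  have step : ∀ (k : ℕ) (prev : ℕ), ∃ N : ℕ, prev < N ∧
      ∀ m, N - prev ≤ m → ‖B^[m] (y (k+1))‖ ≤ (1/2:ℝ)^(k+1) ∧
        ∀ j ≤ k, ‖A^[m] (y j)‖ ≤ (1/2:ℝ)^(k+1) := by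
    intro k prev
    have hpos : (0:ℝ) < (1/2:ℝ)^(k+1) := by positivity
    obtain ⟨MB, hMB⟩ := (Metric.tendsto_atTop.mp (h2 _ (hyY (k+1))).2) _ hpos
    have hA' : ∀ j : ℕ, ∃ M, ∀ m, M ≤ m → ‖A^[m] (y j)‖ ≤ (1/2:ℝ)^(k+1) := by
      intro j
      obtain ⟨M, hM⟩ := (Metric.tendsto_atTop.mp (h2 _ (hyY j)).1) _ hpos
      exact ⟨M, fun m hm => by simpa [dist_eq_norm] using (hM m hm).le⟩
    choose MA hMA using hA'
    set S := MB ⊔ (Finset.range (k+1)).sup MA with hS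
    refine ⟨prev + S + 1, by omega, fun m hm => ?_⟩
    have hSm : S ≤ m := by omega
    have hMBm : MB ≤ m := le_trans (le_max_left _ _) hSm
    refine ⟨by simpa [dist_eq_norm] using (hMB m hMBm).le, fun j hj => ?_⟩
    exact hMA j m (le_trans (le_trans (Finset.le_sup
      (Finset.mem_range.mpr (by omega))) (le_max_right _ _)) hSm)
  choose F hF1 hF2 using step
  set n : ℕ → ℕ := fun k => Nat.rec 0 (fun k prev => F k prev) k with hn_def
  have hnsucc : ∀ k, n (k+1) = F k (n k) := fun _ => rfl
  have hmono : StrictMono n := by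
    apply strictMono_nat_of_lt_succ
    intro k
    rw [hnsucc k]
    exact hF1 k (n k)
  have hk_le : ∀ k, k ≤ n k := fun k => hmono.le_apply
  have hspec : ∀ k m, n (k+1) - n k ≤ m →
      ‖B^[m] (y (k+1))‖ ≤ (1/2:ℝ)^(k+1) ∧
        ∀ j ≤ k, ‖A^[m] (y j)‖ ≤ (1/2:ℝ)^(k+1) := by
    intro k m hm
    rw [hnsucc k] at hm
    exact hF2 k (n k) m hm
  clear_value n
  -- the candidate hypercyclic vector
  set g : ℕ → X := fun k => (l⁻¹) ^ (n k) • B^[n k] (y k) with hg_def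
  have hgY : ∀ k, B^[n k] (y k) ∈ Y := fun k => hBmaps.iterate _ (hyY k)
  have hgC : ∀ k, g k ∈ opCinf A (D : Set X) :=
    fun k => aux_smul_mem hlin (hYsub (hgY k)) _
  have hnorm_inv_pow : ∀ (m : ℕ) (z : X), ‖(l⁻¹) ^ m • z‖ = ‖z‖ := by
    intro m z
    rw [norm_smul, norm_pow, norm_inv, hl, inv_one, one_pow, one_mul]
  have hgiter : ∀ p k, A^[p] (g k) = (l⁻¹) ^ (n k) • A^[p] (B^[n k] (y k)) :=
    fun p k => aux_iter_smul hlin (hYsub (hgY k)) _ p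
  have hAnorm : ∀ p k, ‖A^[p] (g k)‖ = ‖A^[p] (B^[n k] (y k))‖ := by
    intro p k
    rw [hgiter, hnorm_inv_pow]
  clear_value g
  have hbound : ∀ p k, p ≤ n k → ‖A^[p] (g (k+1))‖ ≤ (1/2:ℝ)^(k+1) := by
    intro p k hp
    have hp' : p ≤ n (k+1) := le_trans hp (hmono (Nat.lt_succ_self k)).le
    rw [hAnorm p (k+1), aux_AB hBmaps h1 (hyY (k+1)) p (n (k+1)) hp']
    exact (hspec k (n (k+1) - p) (by omega)).1
  have hsum : ∀ p, Summable (fun k => ‖A^[p] (g k)‖) := by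
    intro p
    apply Summable.of_norm_bounded_eventually_nat (g := fun k => (1/2:ℝ)^k)
      (summable_geometric_of_lt_one (by norm_num) (by norm_num))
    filter_upwards [eventually_ge_atTop (p+1)] with k hk
    obtain ⟨k, rfl⟩ : ∃ k', k = k' + 1 := ⟨k - 1, by omega⟩
    rw [norm_norm]
    exact hbound p k (le_trans (by omega) (hk_le k))
  have hsumX : ∀ p, Summable (fun k => A^[p] (g k)) := fun p => (hsum p).of_norm
  have hSg : Summable g := by
    have := hsumX 0
    simpa using this
  set f : X := ∑' k, g k with hf_def
  clear_value f
  -- `f` is in the domain of every power, and `A^[p]` can be computed termwise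
  have main : ∀ p, f ∈ opDom A (D : Set X) p ∧ A^[p] f = ∑' k, A^[p] (g k) := by
    intro p
    rcases Nat.eq_zero_or_pos p with hp | hp
    · subst hp
      constructor
      · intro k hk; omega
      · simp only [Function.iterate_zero_apply]
        exact hf_def
    · have hs1 : Filter.Tendsto (fun m => ∑ k ∈ Finset.range m, g k)
          Filter.atTop (nhds f) := by
        rw [hf_def]
        exact hSg.hasSum.tendsto_sum_nat
      have hs2 : Filter.Tendsto (fun m => ∑ k ∈ Finset.range m, A^[p] (g k))
          Filter.atTop (nhds (∑' k, A^[p] (g k))) :=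
        (hsumX p).hasSum.tendsto_sum_nat
      have hmem : ∀ m, ((∑ k ∈ Finset.range m, g k, ∑ k ∈ Finset.range m, A^[p] (g k)) : X × X)
          ∈ {q : X × X | q.1 ∈ opDom A (D : Set X) p ∧ q.2 = A^[p] q.1} := by
        intro m
        refine ⟨fun j _ => (aux_sum_mem hlin (Finset.range m) (fun i _ => hgC i)) j, ?_⟩
        exact (aux_iter_sum hlin (Finset.range m) (fun i _ => hgC i) p).symm
      have hlim := (hcl p hp).mem_of_tendsto (hs1.prodMk_nhds hs2)
        (Filter.Eventually.of_forall hmem)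
      exact ⟨hlim.1, hlim.2.symm⟩
  have hfC : ∀ k : ℕ, A^[k] f ∈ (D : Set X) :=
    fun k => (main (k+1)).1 k (Nat.lt_succ_self k)
  have hfCt : f ∈ opCinf (fun x => l • A x) (D : Set X) := by
    intro k
    rw [aux_tilde_iter hlin l hfC k]
    exact D.smul_mem _ (hfC k)
  -- the orbit estimate
  have horb : ∀ j : ℕ,
      ‖(fun x => l • A x)^[n (j+1)] f - y (j+1)‖ ≤
        (((j:ℝ)+1)+1) * (1/2)^(j+1) + (1/2)^(j+1) := by
    intro j
    have h_t_sum : Summable (fun k => l ^ (n (j+1)) • A^[n (j+1)] (g k)) :=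
      (hsumX (n (j+1))).const_smul (l ^ (n (j+1)))
    have h_t_norm : ∀ k, ‖l ^ (n (j+1)) • A^[n (j+1)] (g k)‖
        = ‖A^[n (j+1)] (B^[n k] (y k))‖ := by
      intro k
      rw [norm_smul, norm_pow, hl, one_pow, one_mul, hAnorm]
    have h_eq : (fun x => l • A x)^[n (j+1)] f
        = ∑' k, l ^ (n (j+1)) • A^[n (j+1)] (g k) := by
      rw [aux_tilde_iter hlin l hfC (n (j+1)), (main (n (j+1))).2]
      exact (Summable.tsum_const_smul _ (hsumX (n (j+1)))).symm
    have h_tj : l ^ (n (j+1)) • A^[n (j+1)] (g (j+1)) = y (j+1) := by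
      rw [hgiter, aux_AB hBmaps h1 (hyY (j+1)) (n (j+1)) (n (j+1)) le_rfl]
      simp only [Nat.sub_self, Function.iterate_zero_apply, smul_smul]
      rw [← mul_pow, mul_inv_cancel₀ hl0, one_pow, one_smul]
    have h_split : (∑' k, l ^ (n (j+1)) • A^[n (j+1)] (g k))
        = y (j+1) + ∑' k, (if k = j+1 then 0 else l ^ (n (j+1)) • A^[n (j+1)] (g k)) := by
      rw [Summable.tsum_eq_add_tsum_ite h_t_sum (j+1), h_tj]
    have h_term : ∀ k, ‖if k = j+1 then (0:X) else l ^ (n (j+1)) • A^[n (j+1)] (g k)‖ ≤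
        (if k < j+1 then (1/2:ℝ)^(j+1) else if k = j+1 then 0 else (1/2)^k) := by
      intro k
      rcases lt_trichotomy k (j+1) with hk | hk | hk
      · rw [if_neg (by omega), if_pos hk, h_t_norm,
          aux_AB2 hBmaps h1 (hyY k) (hmono hk).le]
        have hnk : n k ≤ n j := hmono.monotone (by omega)
        have hnj : n j ≤ n (j+1) := (hmono (Nat.lt_succ_self j)).le
        exact (hspec j (n (j+1) - n k) (by omega)).2 k (by omega)
      · subst hk
        rw [if_pos rfl, if_neg (lt_irrefl _), if_pos rfl, norm_zero]
      · rw [if_neg (by omega), if_neg (by omega : ¬ k < j+1), if_neg (by omega : ¬ k = j+1)]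
        obtain ⟨k', rfl⟩ : ∃ k'', k = k'' + 1 := ⟨k - 1, by omega⟩
        have hpk : n (j+1) ≤ n (k'+1) := (hmono hk).le
        rw [h_t_norm, aux_AB hBmaps h1 (hyY (k'+1)) (n (j+1)) (n (k'+1)) hpk]
        have hJk : n (j+1) ≤ n k' := hmono.monotone (by omega)
        exact (hspec k' (n (k'+1) - n (j+1)) (by omega)).1
    have hu_nonneg : ∀ k, (0:ℝ) ≤
        (if k < j+1 then (1/2:ℝ)^(j+1) else if k = j+1 then 0 else (1/2)^k) := by
      intro k
      split_ifs <;> positivity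
    have hu_le : ∀ k, (if k < j+1 then (1/2:ℝ)^(j+1) else if k = j+1 then 0 else (1/2)^k)
        ≤ (1/2:ℝ)^k := by
      intro k
      split_ifs with h h'
      · exact pow_le_pow_of_le_one (by norm_num) (by norm_num) h.le
      · positivity
      · exact le_rfl
    have h_u_sum : Summable (fun k =>
        (if k < j+1 then (1/2:ℝ)^(j+1) else if k = j+1 then 0 else (1/2)^k)) := by
      apply Summable.of_norm_bounded (g := fun k => (1/2:ℝ)^k)
        (summable_geometric_of_lt_one (by norm_num) (by norm_num))
      intro k
      rw [Real.norm_eq_abs, abs_of_nonneg (hu_nonneg k)]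
      exact hu_le k
    have h_ite_norm_sum : Summable (fun k =>
        ‖if k = j+1 then (0:X) else l ^ (n (j+1)) • A^[n (j+1)] (g k)‖) :=
      Summable.of_nonneg_of_le (fun k => norm_nonneg _) h_term h_u_sum
    have h_u_tsum : (∑' k, (if k < j+1 then (1/2:ℝ)^(j+1) else if k = j+1 then 0 else (1/2)^k))
        ≤ (((j:ℝ)+1)+1) * (1/2)^(j+1) + (1/2)^(j+1) := by
      rw [← Summable.sum_add_tsum_nat_add (j+1+1) h_u_sum]
      have hpart1 : (∑ i ∈ Finset.range (j+1+1),
          (if i < j+1 then (1/2:ℝ)^(j+1) else if i = j+1 then 0 else (1/2)^i))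
          ≤ (((j:ℝ)+1)+1) * (1/2)^(j+1) := by
        have hb : ∀ i ∈ Finset.range (j+1+1),
            (if i < j+1 then (1/2:ℝ)^(j+1) else if i = j+1 then 0 else (1/2)^i)
            ≤ (1/2:ℝ)^(j+1) := by
          intro i hi
          rw [Finset.mem_range] at hi
          split_ifs with h h'
          · exact le_rfl
          · positivity
          · exact absurd hi (by omega)
        calc (∑ i ∈ Finset.range (j+1+1),
            (if i < j+1 then (1/2:ℝ)^(j+1) else if i = j+1 then 0 else (1/2)^i))
            ≤ ∑ _i ∈ Finset.range (j+1+1), (1/2:ℝ)^(j+1) := Finset.sum_le_sum hb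
          _ = (((j:ℝ)+1)+1) * (1/2)^(j+1) := by
              rw [Finset.sum_const, Finset.card_range]
              push_cast
              ring
      have hpart2 : (∑' (i:ℕ),
          (if i + (j+1+1) < j+1 then (1/2:ℝ)^(j+1) else if i + (j+1+1) = j+1 then 0
            else (1/2)^(i + (j+1+1))))
          = (1/2:ℝ)^(j+1) := by
        have huv : ∀ i : ℕ,
            (if i + (j+1+1) < j+1 then (1/2:ℝ)^(j+1) else if i + (j+1+1) = j+1 then 0
              else (1/2)^(i + (j+1+1)))
            = (1/2:ℝ)^i * ((1/2:ℝ)^(j+1+1)) := by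
          intro i
          rw [if_neg (by omega), if_neg (by omega), pow_add]
        rw [tsum_congr huv, tsum_mul_right,
          tsum_geometric_of_lt_one (by norm_num) (by norm_num)]
        rw [pow_succ]
        ring
      rw [hpart2]
      exact add_le_add_left hpart1 _
    rw [h_eq, h_split, add_sub_cancel_left]
    calc ‖∑' k, if k = j+1 then (0:X) else l ^ (n (j+1)) • A^[n (j+1)] (g k)‖
        ≤ ∑' k, ‖if k = j+1 then (0:X) else l ^ (n (j+1)) • A^[n (j+1)] (g k)‖ :=
          norm_tsum_le_tsum_norm h_ite_norm_sum
      _ ≤ ∑' k, (if k < j+1 then (1/2:ℝ)^(j+1) else if k = j+1 then 0 else (1/2)^k) :=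
          Summable.tsum_le_tsum h_term h_ite_norm_sum h_u_sum
      _ ≤ (((j:ℝ)+1)+1) * (1/2)^(j+1) + (1/2)^(j+1) := h_u_tsum
  -- the error bound tends to zero
  have hεto : Filter.Tendsto (fun J : ℕ => ((J:ℝ)+1) * (1/2)^J + (1/2)^J)
      Filter.atTop (nhds 0) := by
    have h1' := summable_pow_mul_geometric_of_norm_lt_one (R := ℝ) 1
      (r := 1/2) (by rw [Real.norm_eq_abs, abs_of_pos (by norm_num : (0:ℝ) < 1/2)]; norm_num)
    have h2' : Summable (fun J : ℕ => (1/2:ℝ)^J) :=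
      summable_geometric_of_lt_one (by norm_num) (by norm_num)
    have hS : Summable (fun J : ℕ => ((J:ℝ)+1) * (1/2)^J + (1/2)^J) := by
      have := (h1'.add h2').add h2'
      refine this.congr fun J => ?_
      simp only [pow_one]
      ring
    exact hS.tendsto_atTop_zero
  -- density of the orbit
  have hdense : Dense (Set.range fun m : ℕ => (fun x => l • A x)^[m] f) := by
    rw [Metric.dense_iff]
    intro x r hr
    obtain ⟨J0, hJ0⟩ := (Metric.tendsto_atTop.mp hεto) (r/2) (by positivity)
    obtain ⟨z, hzb, hzT⟩ := Metric.dense_iff.mp hTd x (r/2) (by positivity)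
    obtain ⟨i, rfl⟩ : ∃ i, z = u i := by
      rw [hu] at hzT
      obtain ⟨i, hi⟩ := hzT
      exact ⟨i, hi.symm⟩
    set J := Nat.pair i (J0 + 1) with hJd
    have hJge : J0 + 1 ≤ J := Nat.right_le_pair i (J0+1)
    have hyJ : y J = u i := by rw [hy_def]; simp [hJd, Nat.unpair_pair]
    obtain ⟨j, hj⟩ : ∃ j, J = j + 1 := ⟨J - 1, by omega⟩
    have hest := horb j
    rw [← hj, hyJ] at hest
    have hεJ : ((J:ℝ)+1) * (1/2)^J + (1/2)^J < r/2 := by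
      have := hJ0 J (by omega)
      rw [Real.dist_eq, sub_zero] at this
      calc ((J:ℝ)+1) * (1/2)^J + (1/2)^J
          ≤ |((J:ℝ)+1) * (1/2)^J + (1/2)^J| := le_abs_self _
        _ < r/2 := this
    have hjcast : ((j:ℝ)+1) = (J:ℝ) := by
      rw [hj]; push_cast; ring
    rw [hjcast] at hest
    refine ⟨(fun x => l • A x)^[n J] f, ?_, ⟨n J, rfl⟩⟩
    rw [Metric.mem_ball, dist_comm]
    have hd1 : dist x (u i) < r/2 := by
      rw [Metric.mem_ball] at hzb
      rw [dist_comm]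
      exact hzb
    have hd2 : dist (u i) ((fun x => l • A x)^[n J] f) < r/2 := by
      rw [dist_eq_norm, ← norm_neg]
      simp only [neg_sub]
      calc ‖(fun x => l • A x)^[n J] f - u i‖ ≤ ((J:ℝ)+1) * (1/2)^J + (1/2)^J := hest
        _ < r/2 := hεJ
    calc dist x ((fun x => l • A x)^[n J] f)
        ≤ dist x (u i) + dist (u i) ((fun x => l • A x)^[n J] f) := dist_triangle _ _ _
      _ < r/2 + r/2 := add_lt_add hd1 hd2
      _ = r := by ring
  -- nonzero
  have hfne : f ≠ 0 := by
    intro h0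
    have horbit0 : ∀ m : ℕ, (fun x => l • A x)^[m] f = 0 := by
      intro m
      rw [h0, aux_tilde_iter hlin l (fun k => by
        rw [aux_iter_zero hlin]; exact D.zero_mem) m, aux_iter_zero hlin, smul_zero]
    have hall : ∀ x : X, x = 0 := by
      intro x
      have hx := hdense x
      have hsub : (Set.range fun m : ℕ => (fun x => l • A x)^[m] f) ⊆ {0} := by
        rintro _ ⟨m, rfl⟩
        exact horbit0 m
      have := closure_mono hsub hx
      rwa [closure_singleton, Set.mem_singleton_iff] at this
    have : Subsingleton X := ⟨fun a b => by rw [hall a, hall b]⟩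
    haveI := this
    exact hinfdim inferInstance
  exact ⟨f, hfCt, hfne, hdense⟩
end
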